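/- Let p : E → X be a covering map, where E is a nonempty path-connected, simply connected topological space and X is path-connected and locally path-connected. Let Y ⊆ X be a path-connected subset with y₀ ∈ Y. If the preimage p⁻¹(Y) is path-connected, then every loop in X based at y₀ is homotopic relative to its endpoints, within X, to a loop whose image is contained in Y. -/

import Mathlib

open Set

/-- Path lifting for covering maps: a continuous map `g : ℝ → X` can be lifted on `[0,1]`
to the covering space, starting at any point `e₀` over `g 0`. -/
theorem IsCoveringMap.exists_real_lift {E X : Type*} [TopologicalSpace E] [TopologicalSpace X]
    {p : E → X} (hp : IsCoveringMap p) {g : ℝ → X} (hg : Continuous g)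
    (e₀ : E) (he₀ : p e₀ = g 0) :
    ∃ Γ : ℝ → E, Continuous Γ ∧ Γ 0 = e₀ ∧ ∀ s ∈ Set.Icc (0 : ℝ) 1, p (Γ s) = g s := by
  classical
  set S : Set ℝ := {t | t ∈ Icc (0 : ℝ) 1 ∧
    ∃ Γ : ℝ → E, Continuous Γ ∧ Γ 0 = e₀ ∧ ∀ s ∈ Icc (0 : ℝ) t, p (Γ s) = g s} with hS
  have h0 : (0 : ℝ) ∈ S := by
    refine ⟨⟨le_refl _, zero_le_one⟩, fun _ => e₀, continuous_const, rfl, ?_⟩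
    intro s hs
    have : s = 0 := le_antisymm hs.2 hs.1
    rw [this, he₀]
  have hne : S.Nonempty := ⟨0, h0⟩
  have hbdd : BddAbove S := ⟨1, fun t ht => ht.1.2⟩
  set T := sSup S with hT
  have hT0 : 0 ≤ T := le_csSup hbdd h0
  have hT1 : T ≤ 1 := csSup_le hne fun t ht => ht.1.2
  -- evenly covered neighborhood around `g T`
  have hec := hp (g T)
  haveI : Nonempty ↑(p ⁻¹' {g T}) := by
    obtain ⟨Γ₀, hΓ₀, -⟩ := hp.exists_path_lifts
      ⟨fun s : unitInterval => g (T * s), by fun_prop⟩ e₀ (by simp [he₀])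
    exact ⟨⟨Γ₀ 1, by simpa using congr_fun hΓ₀ 1⟩⟩
  set triv := hec.toTrivialization with htriv
  have hTbase : g T ∈ triv.baseSet := hec.mem_toTrivialization_baseSet
  have hUopen : IsOpen (g ⁻¹' triv.baseSet) := triv.open_baseSet.preimage hg
  have hTU : T ∈ g ⁻¹' triv.baseSet := hTbase
  obtain ⟨ε, εpos, hball⟩ := Metric.isOpen_iff.mp hUopen T hTU
  rw [Real.ball_eq_Ioo] at hball
  -- pick `t ∈ S` close to `T`
  obtain ⟨t, htS, htlt⟩ := exists_lt_of_lt_csSup hne (by linarith : T - ε < T)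
  have htT : t ≤ T := le_csSup hbdd htS
  have ht0 : 0 ≤ t := htS.1.1
  set t' : ℝ := min (T + ε / 2) 1 with ht'
  have htt' : t ≤ t' := le_min (by linarith) htS.1.2
  have hsubU : Icc t t' ⊆ g ⁻¹' triv.baseSet := by
    intro s hs
    apply hball
    constructor
    · linarith [hs.1]
    · have : s ≤ T + ε / 2 := le_trans hs.2 (min_le_left _ _)
      linarith
  obtain ⟨Γ, hΓc, hΓ0, hΓ⟩ := htS.2
  -- the local section through `Γ t`
  have htmem : t ∈ g ⁻¹' triv.baseSet := hsubU ⟨le_refl _, htt'⟩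
  have hpt : p (Γ t) = g t := hΓ t ⟨ht0, le_refl _⟩
  have hΓtsrc : Γ t ∈ triv.source := triv.mem_source.2 (by rw [hpt]; exact htmem)
  set c := (triv (Γ t)).2 with hc
  set σ : ℝ → E := fun s => triv.toPartialHomeomorph.symm (g s, c) with hσ
  have hσcont : ContinuousOn σ (g ⁻¹' triv.baseSet) := by
    apply triv.toPartialHomeomorph.continuousOn_symm.comp
      ((hg.prodMk continuous_const).continuousOn)
    intro s hs
    rw [Bundle.Trivialization.target_eq]
    exact ⟨hs, mem_univ _⟩
  -- clamp into `[t, t']`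
  set clamp : ℝ → ℝ := fun s => max t (min s t') with hclamp
  have hclampc : Continuous clamp := continuous_const.max (continuous_id.min continuous_const)
  have hclampmem : ∀ s, clamp s ∈ Icc t t' := fun s =>
    ⟨le_max_left _ _, max_le htt' (min_le_right _ _)⟩
  set σ' : ℝ → E := fun s => σ (clamp s) with hσ'
  have hσ'c : Continuous σ' :=
    hσcont.comp_continuous hclampc fun s => hsubU (hclampmem s)
  have hclampt : clamp t = t := by
    simp only [hclamp, min_eq_left htt', max_self]
  have hmatch : Γ t = σ' t := by
    show Γ t = σ (clamp t)
    rw [hclampt]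
    show Γ t = triv.toPartialHomeomorph.symm ((g t : X), c)
    have h2 : ((g t : X), c) = (p (Γ t), (triv (Γ t)).2) := by rw [hpt]
    rw [h2]
    exact (triv.symm_apply_mk_proj hΓtsrc).symm
  set Γ' : ℝ → E := fun s => if s ≤ t then Γ s else σ' s with hΓ'
  have hΓ'c : Continuous Γ' := by
    apply Continuous.if_le hΓc hσ'c continuous_id continuous_const
    intro s hs
    simp only [id] at hs
    subst hs
    exact hmatch
  have ht'S : t' ∈ S := by
    refine ⟨⟨le_trans ht0 htt', min_le_right _ _⟩, Γ', hΓ'c, ?_, ?_⟩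
    · simp only [hΓ', if_pos ht0, hΓ0]
    · intro s hs
      by_cases h : s ≤ t
      · simp only [hΓ', if_pos h]
        exact hΓ s ⟨hs.1, h⟩
      · push_neg at h
        have hsI : s ∈ Icc t t' := ⟨le_of_lt h, hs.2⟩
        have hcl : clamp s = s := by
          simp only [hclamp, min_eq_left hs.2, max_eq_right (le_of_lt h)]
        simp only [hΓ', if_neg (not_le.mpr h), hσ', hcl, hσ]
        exact triv.proj_symm_apply' (hsubU hsI)
  have ht'T : t' ≤ T := le_csSup hbdd ht'S
  have h1S : (1 : ℝ) ∈ S := by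
    rcases min_cases (T + ε / 2) 1 with ⟨heq, hle⟩ | ⟨heq, _⟩
    · exfalso
      rw [ht', heq] at ht'T
      linarith
    · rwa [ht', heq] at ht'S
  obtain ⟨_, Γf, hΓfc, hΓf0, hΓf⟩ := h1S
  exact ⟨Γf, hΓfc, hΓf0, hΓf⟩

/-- Lift of a path along a covering map. -/
theorem IsCoveringMap.exists_path_lift' {E X : Type*} [TopologicalSpace E] [TopologicalSpace X]
    {p : E → X} (hp : IsCoveringMap p) {x₀ x₁ : X} (γ : Path x₀ x₁)
    (e₀ : E) (he₀ : p e₀ = x₀) :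
    ∃ (e₁ : E) (Γ : Path e₀ e₁), p e₁ = x₁ ∧ ∀ s, p (Γ s) = γ s := by
  obtain ⟨Γ, hΓc, hΓ0, hΓ⟩ := hp.exists_real_lift γ.continuous_extend e₀
    (by rw [he₀, Path.extend_zero])
  refine ⟨Γ 1, ⟨⟨fun s => Γ s.val, hΓc.comp continuous_subtype_val⟩, ?_, rfl⟩, ?_, ?_⟩
  · simpa using hΓ0
  · have := hΓ 1 ⟨zero_le_one, le_refl _⟩
    rwa [Path.extend_one] at this
  · intro s
    have := hΓ s.val ⟨s.2.1, s.2.2⟩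
    rw [Path.extend_apply γ ⟨s.2.1, s.2.2⟩] at this
    exact this

/-- If `p : E → X` is a covering map from a nonempty, path-connected, simply connected
space onto a path-connected, locally path-connected space, `Y ⊆ X` is path-connected with
`y₀ ∈ Y`, and `p⁻¹(Y)` is path-connected, then every loop in `X` based at `y₀` is
homotopic (rel endpoints) to a loop with image in `Y` (i.e. `π₁(Y, y₀) → π₁(X, y₀)` is
surjective). -/
theorem pi1_surjective_of_preimage_pathConnected {E X : Type*}
    [TopologicalSpace E] [TopologicalSpace X]
    [Nonempty E] [PathConnectedSpace E] [SimplyConnectedSpace E]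
    [PathConnectedSpace X] [LocallyPathConnectedSpace X]
    (p : E → X) (hp : IsCoveringMap p)
    {Y : Set X} (hY : IsPathConnected Y) {y₀ : X} (hy₀ : y₀ ∈ Y)
    (hconn : IsPathConnected (p ⁻¹' Y)) :
    ∀ γ : Path y₀ y₀, ∃ γ' : Path y₀ y₀,
      Path.Homotopic γ γ' ∧ Set.range γ' ⊆ Y := by
  intro γ
  -- surjectivity of `p` at `y₀`
  obtain ⟨e⟩ := ‹Nonempty E›
  obtain ⟨e₀, _, he₀, -⟩ :=
    hp.exists_path_lift' (PathConnectedSpace.somePath (p e) y₀) e rfl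
  -- lift the loop `γ` starting at `e₀`
  obtain ⟨e₁, Γ, he₁, hΓ⟩ := hp.exists_path_lift' γ e₀ he₀
  -- connect `e₀` to `e₁` inside `p ⁻¹' Y`
  obtain ⟨δ, hδ⟩ := hconn.joinedIn e₀ (by rw [Set.mem_preimage, he₀]; exact hy₀)
    e₁ (by rw [Set.mem_preimage, he₁]; exact hy₀)
  -- the candidate loop
  refine ⟨⟨⟨fun s => p (δ s), hp.continuous.comp δ.continuous⟩,
      by simp [he₀], by simp [he₁]⟩, ?_, ?_⟩
  · -- homotopy: Γ and δ are homotopic in the simply connected space E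
    obtain ⟨F⟩ := SimplyConnectedSpace.paths_homotopic Γ δ
    have G := F.map ⟨p, hp.continuous⟩
    refine ⟨ContinuousMap.HomotopyRel.cast G ?_ ?_⟩
    · ext s
      show p (Γ s) = γ s
      exact hΓ s
    · rfl
  · rintro _ ⟨s, rfl⟩
    exact hδ s
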